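/- Moment comparison used in the rounding analysis: let X_1, …, X_n be independent random variables with X_j taking value a_j ≥ 0 with probability q_j and 0 otherwise, and let S = ∑_j X_j. Then for any integer p ≥ 1, E[S^p] ≤ (p)^p · max((∑_j q_j a_j)^p, ∑_j q_j a_j^p) up to a constant factor; in particular E[S^p] ≤ 2^p · p^p · ((∑_j q_j a_j)^p + ∑_j q_j a_j^p). -/

import Mathlib

open MeasureTheory ProbabilityTheory Finset

lemma aux_bern (B : ℕ) : ∀ m : ℕ, m < B → (B+1)^m * (B - m) ≤ B^(m+1) := by
  intro m
  induction m with
  | zero => intro h; simpa using Nat.le_refl B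
  | succ m ih =>
    intro h
    have hmB : m < B := Nat.lt_of_succ_lt h
    have h1 : (B+1) * (B - (m+1)) ≤ B * (B - m) := by
      have h2 : B - (m+1) + 1 = B - m := by omega
      nlinarith [Nat.sub_le B (m+1), h2]
    calc (B+1)^(m+1) * (B - (m+1)) = (B+1)^m * ((B+1) * (B - (m+1))) := by ring
    _ ≤ (B+1)^m * (B * (B - m)) := Nat.mul_le_mul_left _ h1
    _ = B * ((B+1)^m * (B - m)) := by ring
    _ ≤ B * B^(m+1) := Nat.mul_le_mul_left _ (ih hmB)
    _ = B^(m+2) := by ring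

lemma aux_num (p r : ℕ) (hp : 2 ≤ p) (hr2 : 2 ≤ r) (hrp : r ≤ p) :
    2*p + (2*p+1)^(r-1) ≤ (2*p)^r + 1 := by
  have h1 : (2*p+1)^(r-1) * (2*p - (r-1)) ≤ (2*p)^r := by
    have h := aux_bern (2*p) (r-1) (by omega)
    have hr : r - 1 + 1 = r := by omega
    rwa [hr] at h
  have h3 : (2*p+1)^(r-1) * 3 ≤ (2*p)^r :=
    le_trans (Nat.mul_le_mul_left _ (by omega : 3 ≤ 2*p - (r-1))) h1
  have h4 : 6 * p ≤ (2*p)^r := by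
    calc 6 * p ≤ (2*p)^2 := by nlinarith
    _ ≤ (2*p)^r := Nat.pow_le_pow_right (by omega) hr2
  omega

lemma aux_interp {n p k : ℕ} (hp : 1 ≤ p) (hk1 : 1 ≤ k) (hkp : k ≤ p)
    (q a : Fin n → ℝ) (hq : ∀ j, 0 ≤ q j) (ha : ∀ j, 0 ≤ a j) :
    (∑ j, q j * a j ^ k) ^ p ≤ ((∑ j, q j * a j) ^ p + ∑ j, q j * a j ^ p) ^ k := by
  set M : ℝ := ∑ j, q j * a j with hM
  set Tp : ℝ := ∑ j, q j * a j ^ p with hTp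
  have hM0 : 0 ≤ M := Finset.sum_nonneg fun j _ => mul_nonneg (hq j) (ha j)
  have hTp0 : 0 ≤ Tp := Finset.sum_nonneg fun j _ => mul_nonneg (hq j) (pow_nonneg (ha j) p)
  have hTk0 : 0 ≤ ∑ j, q j * a j ^ k :=
    Finset.sum_nonneg fun j _ => mul_nonneg (hq j) (pow_nonneg (ha j) k)
  have hQ0 : 0 ≤ M ^ p + Tp := add_nonneg (pow_nonneg hM0 p) hTp0
  rcases eq_or_lt_of_le hkp with rfl | hklt
  · exact pow_le_pow_left₀ hTp0 (le_add_of_nonneg_left (pow_nonneg hM0 k)) k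
  rcases eq_or_lt_of_le hk1 with rfl | hk2
  · simp only [pow_one]
    exact le_add_of_nonneg_right hTp0
  have hk2' : 2 ≤ k := hk2
  have hpk : (0:ℝ) < (p:ℝ) - (k:ℝ) := by
    have : (k:ℝ) < (p:ℝ) := by exact_mod_cast hklt
    linarith
  have hpm1 : (0:ℝ) < (p:ℝ) - 1 := by
    have : (1:ℝ) < (p:ℝ) := by exact_mod_cast lt_of_le_of_lt hk1 hklt
    linarith
  have hkm1 : (0:ℝ) < (k:ℝ) - 1 := by
    have : (1:ℝ) < (k:ℝ) := by exact_mod_cast hk2'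
    linarith
  set α : ℝ := ((p:ℝ) - k) / ((p:ℝ) - 1) with hα
  set β : ℝ := ((k:ℝ) - 1) / ((p:ℝ) - 1) with hβ
  have hα0 : 0 < α := div_pos hpk hpm1
  have hβ0 : 0 < β := div_pos hkm1 hpm1
  have hαβ : α + β = 1 := by rw [hα, hβ]; field_simp; ring
  have hαpβ : α + (p:ℝ) * β = k := by rw [hα, hβ]; field_simp; ring
  set u : ℝ := ((p:ℝ) - 1) / ((p:ℝ) - k) with hu
  set v : ℝ := ((p:ℝ) - 1) / ((k:ℝ) - 1) with hv
  have hαu : α * u = 1 := by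
    rw [hα, hu]; field_simp
  have hβv : β * v = 1 := by
    rw [hβ, hv]; field_simp
  have h1u : 1/u = α := by rw [hu, hα, one_div_div]
  have h1v : 1/v = β := by rw [hv, hβ, one_div_div]
  have hconj : Real.HolderConjugate u v := by
    rw [Real.holderConjugate_iff]
    constructor
    · rw [hu, lt_div_iff₀ hpk]
      have : (2:ℝ) ≤ (k:ℝ) := by exact_mod_cast hk2'
      linarith
    · rw [← one_div u, ← one_div v, h1u, h1v, hαβ]
  have key : ∀ j, q j * a j ^ k = (q j * a j) ^ α * (q j * a j ^ p) ^ β := by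
    intro j
    rcases eq_or_lt_of_le (hq j) with hq0 | hqpos
    · rw [← hq0]
      simp [Real.zero_rpow (ne_of_gt hα0), Real.zero_rpow (ne_of_gt hβ0)]
    rcases eq_or_lt_of_le (ha j) with ha0 | hapos
    · rw [← ha0]
      simp [zero_pow (by omega : k ≠ 0), zero_pow (by omega : p ≠ 0),
        Real.zero_rpow (ne_of_gt hα0), Real.zero_rpow (ne_of_gt hβ0)]
    · rw [Real.mul_rpow (le_of_lt hqpos) (le_of_lt hapos),
        Real.mul_rpow (le_of_lt hqpos) (pow_nonneg (le_of_lt hapos) p),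
        ← Real.rpow_natCast (a j) p, ← Real.rpow_natCast (a j) k,
        ← Real.rpow_mul (le_of_lt hapos)]
      calc q j * a j ^ (k:ℝ)
          = q j ^ (α + β) * a j ^ (α + (p:ℝ)*β) := by rw [hαβ, hαpβ]; simp
        _ = (q j ^ α * a j ^ α) * (q j ^ β * a j ^ ((p:ℝ)*β)) := by
            rw [Real.rpow_add hqpos, Real.rpow_add hapos]; ring
  have hTkle : (∑ j, q j * a j ^ k) ≤ M ^ α * Tp ^ β := by
    calc (∑ j, q j * a j ^ k)
        = ∑ j, (q j * a j) ^ α * (q j * a j ^ p) ^ β :=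
          Finset.sum_congr rfl fun j _ => key j
      _ ≤ (∑ j, ((q j * a j) ^ α) ^ u) ^ (1/u) * (∑ j, ((q j * a j ^ p) ^ β) ^ v) ^ (1/v) :=
          Real.inner_le_Lp_mul_Lq_of_nonneg univ hconj
            (fun j _ => Real.rpow_nonneg (mul_nonneg (hq j) (ha j)) α)
            (fun j _ => Real.rpow_nonneg (mul_nonneg (hq j) (pow_nonneg (ha j) p)) β)
      _ = M ^ α * Tp ^ β := by
          rw [h1u, h1v]
          congr 2
          · refine Finset.sum_congr rfl fun j _ => ?_
            rw [← Real.rpow_mul (mul_nonneg (hq j) (ha j)), hαu, Real.rpow_one]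
          · refine Finset.sum_congr rfl fun j _ => ?_
            rw [← Real.rpow_mul (mul_nonneg (hq j) (pow_nonneg (ha j) p)), hβv, Real.rpow_one]
  calc (∑ j, q j * a j ^ k) ^ p
      ≤ (M ^ α * Tp ^ β) ^ p := pow_le_pow_left₀ hTk0 hTkle p
    _ = (M ^ p) ^ α * Tp ^ (β * (p:ℝ)) := by
        rw [mul_pow, ← Real.rpow_natCast (M ^ α) p, ← Real.rpow_natCast (Tp ^ β) p,
          ← Real.rpow_mul hM0, ← Real.rpow_mul hTp0, mul_comm α (p:ℝ),
          Real.rpow_mul hM0, Real.rpow_natCast]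
    _ ≤ (M ^ p + Tp) ^ α * (M ^ p + Tp) ^ (β * (p:ℝ)) := by
        apply mul_le_mul
        · exact Real.rpow_le_rpow (pow_nonneg hM0 p) (le_add_of_nonneg_right hTp0)
            (le_of_lt hα0)
        · exact Real.rpow_le_rpow hTp0 (le_add_of_nonneg_left (pow_nonneg hM0 p))
            (mul_nonneg (le_of_lt hβ0) (Nat.cast_nonneg p))
        · exact Real.rpow_nonneg hTp0 _
        · exact Real.rpow_nonneg hQ0 _
    _ = (M ^ p + Tp) ^ k := by
        rw [← Real.rpow_add' hQ0 (by rw [show α + β * (p:ℝ) = k by linarith [hαpβ]]; positivity),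
          show α + β * (p:ℝ) = (k:ℝ) by linarith [hαpβ], Real.rpow_natCast]

theorem moment_comparison {Ω : Type*} [MeasurableSpace Ω] (μ : Measure Ω)
    [IsProbabilityMeasure μ] (n : ℕ) (X : Fin n → Ω → ℝ)
    (a q : Fin n → ℝ) (ha : ∀ j, 0 ≤ a j)
    (hq : ∀ j, 0 ≤ q j ∧ q j ≤ 1)
    (hmeas : ∀ j, Measurable (X j))
    (hindep : ProbabilityTheory.iIndepFun X μ)
    (hval : ∀ j ω, X j ω = a j ∨ X j ω = 0)
    (hdist : ∀ j, μ {ω | X j ω = a j} = ENNReal.ofReal (q j))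
    (p : ℕ) (hp : 1 ≤ p) :
    ∫ ω, (∑ j, X j ω) ^ p ∂μ ≤
      2 ^ p * (p : ℝ) ^ p * ((∑ j, q j * a j) ^ p + ∑ j, q j * a j ^ p) := by
  classical
  have hq0 : ∀ j, 0 ≤ q j := fun j => (hq j).1
  set S : Ω → ℝ := fun ω => ∑ j, X j ω with hS
  set A : ℝ := ∑ j, a j with hA
  set T : ℕ → ℝ := fun k => ∑ j, q j * a j ^ k with hT
  have hX0 : ∀ j ω, 0 ≤ X j ω := by
    intro j ω; rcases hval j ω with h | h <;> rw [h]; exact ha j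
  have hXa : ∀ j ω, X j ω ≤ a j := by
    intro j ω; rcases hval j ω with h | h <;> rw [h]; exact ha j
  have hS0 : ∀ ω, 0 ≤ S ω := fun ω => Finset.sum_nonneg fun j _ => hX0 j ω
  have hSA : ∀ ω, S ω ≤ A := fun ω => Finset.sum_le_sum fun j _ => hXa j ω
  have hA0 : 0 ≤ A := Finset.sum_nonneg fun j _ => ha j
  have hSmeas : Measurable S := Finset.measurable_sum univ fun j _ => hmeas j
  have hintb : ∀ (g : Ω → ℝ) (C : ℝ), Measurable g → (∀ ω, ‖g ω‖ ≤ C) → Integrable g μ :=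
    fun g C hg hb => ⟨hg.aestronglyMeasurable, HasFiniteIntegral.of_bounded (ae_of_all μ hb)⟩
  have hT0 : ∀ k, 0 ≤ T k := fun k =>
    Finset.sum_nonneg fun j _ => mul_nonneg (hq0 j) (pow_nonneg (ha j) k)
  -- moments of X j
  have hmom : ∀ (j : Fin n) (m : ℕ), 1 ≤ m → ∫ ω, X j ω ^ m ∂μ = q j * a j ^ m := by
    intro j m hm
    have hsmeas : MeasurableSet {ω | X j ω = a j} :=
      (hmeas j) (measurableSet_singleton (a j))
    have hpt : ∀ ω, X j ω ^ m = ({ω | X j ω = a j}).indicator (fun _ => a j ^ m) ω := by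
      intro ω
      rcases hval j ω with h | h
      · have hmem : ω ∈ {ω | X j ω = a j} := h
        rw [Set.indicator_of_mem hmem, h]
      · by_cases hmem : ω ∈ {ω | X j ω = a j}
        · have haj : a j = 0 := by rw [← hmem]; exact h
          rw [Set.indicator_of_mem hmem, h, haj, zero_pow (by omega)]
        · rw [Set.indicator_of_notMem hmem, h, zero_pow (by omega)]
    calc ∫ ω, X j ω ^ m ∂μ
        = ∫ ω, ({ω | X j ω = a j}).indicator (fun _ => a j ^ m) ω ∂μ :=
          integral_congr_ae (Filter.EventuallyEq.of_eq (funext hpt))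
      _ = (μ {ω | X j ω = a j}).toReal • (a j ^ m) := integral_indicator_const _ hsmeas
      _ = q j * a j ^ m := by rw [hdist j, ENNReal.toReal_ofReal (hq0 j), smul_eq_mul]
  set mS : ℕ → ℝ := fun r => ∫ ω, S ω ^ r ∂μ with hmS
  have hmS0 : ∀ r, 0 ≤ mS r := fun r =>
    integral_nonneg fun ω => pow_nonneg (hS0 ω) r
  have hmSz : mS 0 = 1 := by
    simp [hmS]
  -- the recursion
  have hrec : ∀ r : ℕ, 1 ≤ r →
      mS r ≤ ∑ t ∈ Finset.range r, ((r-1).choose t : ℝ) * T (t+1) * mS (r-1-t) := by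
    intro r hr
    obtain ⟨r', rfl⟩ : ∃ r', r = r' + 1 := ⟨r - 1, by omega⟩
    simp only [Nat.add_sub_cancel]
    have key : ∀ j : Fin n, ∫ ω, X j ω * S ω ^ r' ∂μ ≤
        ∑ t ∈ Finset.range (r'+1), (r'.choose t : ℝ) * (q j * a j ^ (t+1) * mS (r'-t)) := by
      intro j
      set Sj : Ω → ℝ := ∑ i ∈ Finset.univ.erase j, X i with hSj
      have hSjapp : ∀ ω, Sj ω = ∑ i ∈ Finset.univ.erase j, X i ω := by
        intro ω; rw [hSj]; exact Finset.sum_apply ω _ _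
      have hSjmeas : Measurable Sj := by
        rw [show Sj = fun ω => ∑ i ∈ Finset.univ.erase j, X i ω from funext hSjapp]
        exact Finset.measurable_sum _ fun i _ => hmeas i
      have hSj0 : ∀ ω, 0 ≤ Sj ω := by
        intro ω; rw [hSjapp]; exact Finset.sum_nonneg fun i _ => hX0 i ω
      have hSjS : ∀ ω, Sj ω ≤ S ω := by
        intro ω; rw [hSjapp]
        exact Finset.sum_le_sum_of_subset_of_nonneg (Finset.erase_subset j Finset.univ)
          (fun i _ _ => hX0 i ω)
      have hSjA : ∀ ω, Sj ω ≤ A := fun ω => le_trans (hSjS ω) (hSA ω)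
      have hsplit : ∀ ω, S ω = X j ω + Sj ω := by
        intro ω; rw [hSjapp]
        exact (Finset.add_sum_erase Finset.univ (fun i => X i ω) (Finset.mem_univ j)).symm
      have hindepj : ProbabilityTheory.IndepFun (X j) Sj μ :=
        (hindep.indepFun_finsetSum_of_notMem hmeas (Finset.notMem_erase j Finset.univ)).symm
      have hintX : ∀ m : ℕ, Integrable (fun ω => X j ω ^ m) μ := by
        intro m
        apply hintb _ (a j ^ m) ((hmeas j).pow_const m)
        intro ω
        rw [Real.norm_eq_abs, abs_of_nonneg (pow_nonneg (hX0 j ω) m)]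
        exact pow_le_pow_left₀ (hX0 j ω) (hXa j ω) m
      have hintSj : ∀ m : ℕ, Integrable (fun ω => Sj ω ^ m) μ := by
        intro m
        apply hintb _ (A ^ m) (hSjmeas.pow_const m)
        intro ω
        rw [Real.norm_eq_abs, abs_of_nonneg (pow_nonneg (hSj0 ω) m)]
        exact pow_le_pow_left₀ (hSj0 ω) (hSjA ω) m
      have hintS : ∀ m : ℕ, Integrable (fun ω => S ω ^ m) μ := by
        intro m
        apply hintb _ (A ^ m) (hSmeas.pow_const m)
        intro ω
        rw [Real.norm_eq_abs, abs_of_nonneg (pow_nonneg (hS0 ω) m)]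
        exact pow_le_pow_left₀ (hS0 ω) (hSA ω) m
      have hpt : (fun ω => X j ω * S ω ^ r') =
          fun ω => ∑ t ∈ Finset.range (r'+1),
            (r'.choose t : ℝ) * (X j ω ^ (t+1) * Sj ω ^ (r'-t)) := by
        funext ω
        rw [hsplit ω, add_pow, Finset.mul_sum]
        refine Finset.sum_congr rfl fun t ht => ?_
        rw [pow_succ']
        ring
      have hintprod : ∀ t : ℕ, Integrable (fun ω => X j ω ^ (t+1) * Sj ω ^ (r'-t)) μ := by
        intro t
        apply hintb _ (a j ^ (t+1) * A ^ (r'-t))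
          (((hmeas j).pow_const (t+1)).mul (hSjmeas.pow_const (r'-t)))
        intro ω
        simp only [Pi.mul_apply]
        rw [Real.norm_eq_abs, abs_of_nonneg
          (mul_nonneg (pow_nonneg (hX0 j ω) _) (pow_nonneg (hSj0 ω) _))]
        exact mul_le_mul (pow_le_pow_left₀ (hX0 j ω) (hXa j ω) _)
          (pow_le_pow_left₀ (hSj0 ω) (hSjA ω) _) (pow_nonneg (hSj0 ω) _)
          (pow_nonneg (ha j) _)
      have hindep_pow : ∀ t : ℕ, ProbabilityTheory.IndepFun
          (fun ω => X j ω ^ (t+1)) (fun ω => Sj ω ^ (r'-t)) μ :=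
        fun t => hindepj.comp (measurable_id.pow_const (t+1)) (measurable_id.pow_const (r'-t))
      calc ∫ ω, X j ω * S ω ^ r' ∂μ
          = ∫ ω, ∑ t ∈ Finset.range (r'+1),
              (r'.choose t : ℝ) * (X j ω ^ (t+1) * Sj ω ^ (r'-t)) ∂μ := by rw [hpt]
        _ = ∑ t ∈ Finset.range (r'+1),
              ∫ ω, (r'.choose t : ℝ) * (X j ω ^ (t+1) * Sj ω ^ (r'-t)) ∂μ :=
            integral_finset_sum _ fun t _ => (hintprod t).const_mul _
        _ = ∑ t ∈ Finset.range (r'+1),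
              (r'.choose t : ℝ) * ((q j * a j ^ (t+1)) * ∫ ω, Sj ω ^ (r'-t) ∂μ) := by
            refine Finset.sum_congr rfl fun t ht => ?_
            rw [MeasureTheory.integral_const_mul]
            congr 1
            have hmul := (hindep_pow t).integral_fun_mul_eq_mul_integral (hintX (t+1)).aestronglyMeasurable (hintSj (r'-t)).aestronglyMeasurable
            have : ∫ ω, X j ω ^ (t+1) * Sj ω ^ (r'-t) ∂μ =
                (∫ ω, X j ω ^ (t+1) ∂μ) * ∫ ω, Sj ω ^ (r'-t) ∂μ := hmul
            rw [this, hmom j (t+1) (by omega)]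
        _ ≤ ∑ t ∈ Finset.range (r'+1),
              (r'.choose t : ℝ) * (q j * a j ^ (t+1) * mS (r'-t)) := by
            refine Finset.sum_le_sum fun t ht => ?_
            apply mul_le_mul_of_nonneg_left _ (Nat.cast_nonneg _)
            apply mul_le_mul_of_nonneg_left _
              (mul_nonneg (hq0 j) (pow_nonneg (ha j) _))
            exact integral_mono (hintSj _) (hintS _)
              (fun ω => pow_le_pow_left₀ (hSj0 ω) (hSjS ω) _)
    have hintXS : ∀ j : Fin n, Integrable (fun ω => X j ω * S ω ^ r') μ := by
      intro j
      apply hintb _ (a j * A ^ r') ((hmeas j).mul (hSmeas.pow_const r'))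
      intro ω
      simp only [Pi.mul_apply]
      rw [Real.norm_eq_abs, abs_of_nonneg (mul_nonneg (hX0 j ω) (pow_nonneg (hS0 ω) r'))]
      exact mul_le_mul (hXa j ω) (pow_le_pow_left₀ (hS0 ω) (hSA ω) r')
        (pow_nonneg (hS0 ω) r') (ha j)
    calc mS (r'+1)
        = ∫ ω, ∑ j, X j ω * S ω ^ r' ∂μ := by
          refine integral_congr_ae (Filter.EventuallyEq.of_eq (funext fun ω => ?_))
          rw [pow_succ, mul_comm, show S ω = ∑ j, X j ω from rfl, Finset.sum_mul]
      _ = ∑ j, ∫ ω, X j ω * S ω ^ r' ∂μ := integral_finset_sum _ fun j _ => hintXS j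
      _ ≤ ∑ j, ∑ t ∈ Finset.range (r'+1),
            (r'.choose t : ℝ) * (q j * a j ^ (t+1) * mS (r'-t)) :=
          Finset.sum_le_sum fun j _ => key j
      _ = ∑ t ∈ Finset.range (r'+1), (r'.choose t : ℝ) * T (t+1) * mS (r'-t) := by
          rw [Finset.sum_comm]
          refine Finset.sum_congr rfl fun t ht => ?_
          rw [show T (t+1) = ∑ j, q j * a j ^ (t+1) from rfl]
          simp only [Finset.mul_sum, Finset.sum_mul]
          exact Finset.sum_congr rfl fun j _ => by ring
  -- analytic induction
  set Q : ℝ := (∑ j, q j * a j) ^ p + ∑ j, q j * a j ^ p with hQ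
  have hQ0 : 0 ≤ Q := add_nonneg
    (pow_nonneg (Finset.sum_nonneg fun j _ => mul_nonneg (hq0 j) (ha j)) p) (hT0 p)
  set N : ℝ := Q ^ ((p:ℝ)⁻¹) with hN
  have hN0 : 0 ≤ N := Real.rpow_nonneg hQ0 _
  have hNp : N ^ p = Q := Real.rpow_inv_natCast_pow hQ0 (by omega)
  have hTN : ∀ k, 1 ≤ k → k ≤ p → T k ≤ N ^ k := by
    intro k h1 h2
    have h := aux_interp hp h1 h2 q a hq0 ha
    have h2' : T k ^ p ≤ (N ^ k) ^ p := by
      rw [← pow_mul, mul_comm k p, pow_mul, hNp]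
      exact h
    exact (pow_le_pow_iff_left₀ (hT0 k) (pow_nonneg hN0 k) (by omega)).1 h2'
  have main : ∀ r : ℕ, 1 ≤ r → r ≤ p → mS r ≤ (2*(p:ℝ))^(r-1) * N ^ r := by
    intro r
    induction r using Nat.strong_induction_on with
    | _ r ih =>
      intro hr1 hrp
      obtain ⟨r', rfl⟩ : ∃ r', r = r' + 1 := ⟨r - 1, by omega⟩
      have step := hrec (r'+1) (by omega)
      simp only [Nat.add_sub_cancel] at step
      -- bound each term
      have hlast : ((r').choose r' : ℝ) * T (r'+1) * mS (r'-r') ≤ N ^ (r'+1) := by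
        simp only [Nat.choose_self, Nat.sub_self, Nat.cast_one, one_mul, hmSz, mul_one]
        exact hTN (r'+1) (by omega) hrp
      have hterm : ∀ t ∈ Finset.range r', ((r').choose t : ℝ) * T (t+1) * mS (r'-t) ≤
          ((r').choose t : ℝ) * (2*(p:ℝ))^(r'-1-t) * N ^ (r'+1) := by
        intro t ht
        have htr : t < r' := Finset.mem_range.1 ht
        have h1 : T (t+1) ≤ N ^ (t+1) := hTN (t+1) (by omega) (by omega)
        have h2 : mS (r'-t) ≤ (2*(p:ℝ))^(r'-t-1) * N ^ (r'-t) :=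
          ih (r'-t) (by omega) (by omega) (by omega)
        calc ((r').choose t : ℝ) * T (t+1) * mS (r'-t)
            ≤ ((r').choose t : ℝ) * N ^ (t+1) * ((2*(p:ℝ))^(r'-t-1) * N ^ (r'-t)) := by
              apply mul_le_mul
              · exact mul_le_mul_of_nonneg_left h1 (Nat.cast_nonneg _)
              · exact h2
              · exact hmS0 _
              · positivity
          _ = ((r').choose t : ℝ) * (2*(p:ℝ))^(r'-1-t) * N ^ (r'+1) := by
              rw [show r'-1-t = r'-t-1 by omega, show (r':ℕ)+1 = (t+1)+(r'-t) by omega,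
                pow_add]
              ring
      -- sum up
      have hsum : mS (r'+1) ≤
          (∑ t ∈ Finset.range r', ((r').choose t : ℝ) * (2*(p:ℝ))^(r'-1-t)) * N ^ (r'+1)
            + N ^ (r'+1) := by
        calc mS (r'+1) ≤ ∑ t ∈ Finset.range (r'+1), ((r').choose t : ℝ) * T (t+1) * mS (r'-t) :=
              step
          _ = (∑ t ∈ Finset.range r', ((r').choose t : ℝ) * T (t+1) * mS (r'-t))
              + ((r').choose r' : ℝ) * T (r'+1) * mS (r'-r') := Finset.sum_range_succ _ _
          _ ≤ (∑ t ∈ Finset.range r', ((r').choose t : ℝ) * (2*(p:ℝ))^(r'-1-t) * N ^ (r'+1))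
              + N ^ (r'+1) := add_le_add (Finset.sum_le_sum hterm) hlast
          _ = _ := by rw [← Finset.sum_mul]
      -- numeric bound
      have hnum : (∑ t ∈ Finset.range r', ((r').choose t : ℝ) * (2*(p:ℝ))^(r'-1-t)) + 1
          ≤ (2*(p:ℝ))^(r') := by
        rcases Nat.eq_zero_or_pos r' with rfl | hr'
        · simp
        have hp2 : 2 ≤ p := by omega
        have hcast := aux_num p (r'+1) hp2 (by omega) hrp
        have h2p : (0:ℝ) < 2*(p:ℝ) := by positivity
        rw [← mul_le_mul_iff_right₀ h2p]
        have expand : (2*(p:ℝ)) * ((∑ t ∈ Finset.range r', ((r').choose t : ℝ) *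
            (2*(p:ℝ))^(r'-1-t)) + 1) = (∑ t ∈ Finset.range r', ((r').choose t : ℝ) *
            (2*(p:ℝ))^(r'-t)) + 2*(p:ℝ) := by
          rw [mul_add, mul_one, Finset.mul_sum]
          congr 1
          refine Finset.sum_congr rfl fun t ht => ?_
          have htr : t < r' := Finset.mem_range.1 ht
          rw [show r'-t = (r'-1-t)+1 by omega, pow_succ]
          ring
        rw [expand]
        have hbinom : (∑ t ∈ Finset.range r', ((r').choose t : ℝ) * (2*(p:ℝ))^(r'-t)) + 1
            = (1 + 2*(p:ℝ))^(r') := by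
          rw [add_pow]
          rw [Finset.sum_range_succ]
          simp only [one_pow, one_mul, Nat.choose_self, Nat.cast_one, Nat.sub_self, pow_zero,
            mul_one]
          congr 1
          refine Finset.sum_congr rfl fun t ht => ?_
          ring
        have : (∑ t ∈ Finset.range r', ((r').choose t : ℝ) * (2*(p:ℝ))^(r'-t))
            = (1 + 2*(p:ℝ))^(r') - 1 := by linarith [hbinom]
        rw [this]
        have hc : ((2*p + (2*p+1)^(r'+1-1) : ℕ) : ℝ) ≤ (((2*p)^(r'+1) + 1 : ℕ) : ℝ) := by
          exact_mod_cast hcast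
        push_cast at hc

        have e1 : (1 + 2*(p:ℝ))^r' = (2*(p:ℝ)+1)^r' := by ring_nf
        have e2 : (2*(p:ℝ))^(r'+1) = (2*(p:ℝ))^r' * (2*(p:ℝ)) := pow_succ _ _
        linarith [hc, e1, e2]
      calc mS (r'+1) ≤ (∑ t ∈ Finset.range r', ((r').choose t : ℝ) * (2*(p:ℝ))^(r'-1-t))
            * N ^ (r'+1) + N ^ (r'+1) := hsum
        _ = ((∑ t ∈ Finset.range r', ((r').choose t : ℝ) * (2*(p:ℝ))^(r'-1-t)) + 1)
            * N ^ (r'+1) := by ring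
        _ ≤ (2*(p:ℝ))^(r') * N ^ (r'+1) := by
            apply mul_le_mul_of_nonneg_right hnum (pow_nonneg hN0 _)
        _ = (2*(p:ℝ))^((r'+1)-1) * N ^ (r'+1) := by norm_num
  -- conclusion
  have hfin := main p hp le_rfl
  have hgoal : mS p ≤ 2 ^ p * (p : ℝ) ^ p * Q := by
    calc mS p ≤ (2*(p:ℝ))^(p-1) * N ^ p := hfin
      _ = (2*(p:ℝ))^(p-1) * Q := by rw [hNp]
      _ ≤ (2*(p:ℝ))^p * Q := by
          apply mul_le_mul_of_nonneg_right _ hQ0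
          apply pow_le_pow_right₀ _ (by omega)
          have : (1:ℝ) ≤ (p:ℝ) := by exact_mod_cast hp
          linarith
      _ = 2 ^ p * (p : ℝ) ^ p * Q := by rw [mul_pow]
  exact hgoal
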